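/- For n ≥ 3, the alternate Cₙ-snake is a difference graph via the labeling f(u_i) = 2^{j + ⌊i/n⌋} · (1 + 2^{n−2})^{⌊i/n⌋} for i = 0, 1, 2, ..., where j = i mod n: the labeling is injective, adjacent vertices have label difference in the label set, and non-adjacent vertices have label difference outside the label set. -/

import Mathlib

/-- Directed edge relation of the alternate `Cₙ`-snake with `k` blocks on
vertices `u₀, …, u_{kn}`: consecutive vertices are adjacent (path edge
`u_{mn} u_{mn+1}` and the cycle path `u_{mn+1}, …, u_{(m+1)n}`), and each block's
cycle is closed by the edge `u_{mn+1} u_{(m+1)n}`. -/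
def altCnSnakeRel (n k : ℕ) (a b : Fin (k * n + 1)) : Prop :=
  (b : ℕ) = (a : ℕ) + 1 ∨
    ∃ m < k, (a : ℕ) = m * n + 1 ∧ (b : ℕ) = (m + 1) * n

/-- Adjacency in the alternate `Cₙ`-snake. -/
def altCnSnakeAdj (n k : ℕ) (x y : Fin (k * n + 1)) : Prop :=
  altCnSnakeRel n k x y ∨ altCnSnakeRel n k y x

/-- Labeling `f(uᵢ) = 2^((i mod n) + ⌊i/n⌋) · (1 + 2^(n−2))^⌊i/n⌋`. -/
def altCnSnakeLabel (n k : ℕ) (x : Fin (k * n + 1)) : ℕ :=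
  2 ^ ((x : ℕ) % n + (x : ℕ) / n) * (1 + 2 ^ (n - 2)) ^ ((x : ℕ) / n)

open Nat in
lemma odd_fact2 {u : ℕ} (hu : Odd u) : u.factorization 2 = 0 :=
  Nat.factorization_eq_zero_of_not_dvd (by simp [Nat.two_dvd_ne_zero, Nat.odd_iff.mp hu])

lemma two_pow_mul_inj {a b u v : ℕ} (hu : Odd u) (hv : Odd v)
    (h : 2^a * u = 2^b * v) : a = b ∧ u = v := by
  have hu0 : u ≠ 0 := by rintro rfl; simp at hu
  have hv0 : v ≠ 0 := by rintro rfl; simp at hv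
  have hab : a = b := by
    have := congrArg (fun t => t.factorization 2) h
    simpa [Nat.factorization_mul, pow_ne_zero, hu0, hv0,
      Nat.Prime.factorization_pow Nat.prime_two, odd_fact2 hu, odd_fact2 hv] using this
  subst hab
  exact ⟨rfl, Nat.eq_of_mul_eq_mul_left (by positivity) h⟩

lemma powB_cancel {B q Q m : ℕ} (hB : 1 < B) (hm : 0 < m) (h : B^q * m = B^Q) :
    q ≤ Q ∧ m = B^(Q-q) := by
  have hq : q ≤ Q := by
    rw [← Nat.pow_le_pow_iff_right hB]
    calc B^q ≤ B^q * m := Nat.le_mul_of_pos_right _ hm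
    _ = B^Q := h
  refine ⟨hq, ?_⟩
  have : B^q * m = B^q * B^(Q-q) := by rw [h, ← pow_add]; congr 1; omega
  exact Nat.eq_of_mul_eq_mul_left (by positivity) this

lemma odd_not_dvd_two_pow {B u : ℕ} (hB : Odd B) (h1 : 1 < B) (h : B ∣ 2^u) : False := by
  have hc : Nat.Coprime B (2^u) := Nat.Coprime.pow_right u (hB.coprime_two_right)
  have := Nat.eq_one_of_dvd_coprimes hc (dvd_refl B) h
  omega

lemma B_pow_lower (p e : ℕ) (he : 1 ≤ e) : 2^(p*e) + 1 ≤ (1+2^p)^e := by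
  induction e with
  | zero => omega
  | succ e ih =>
    rcases Nat.eq_or_lt_of_le he with h | h
    · simp [← h]
    · have ih := ih (by omega)
      have h1 : (1+2^p)^(e+1) = (1+2^p)^e * (1+2^p) := by ring
      rw [h1]
      have h2 : 2^(p*(e+1)) = 2^(p*e) * 2^p := by rw [← pow_add]; ring_nf
      nlinarith [pow_pos (show 0 < 2 from by norm_num) (p*e), pow_pos (show 0 < 2 from by norm_num) p]

section Key
variable (p : ℕ)

lemma key (hp : 1 ≤ p) (q1 j1 q2 j2 Q J : ℕ)
    (hj1 : j1 < p + 2) (hj2 : j2 < p + 2) (hJ : J < p + 2)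
    (hlt : q1 < q2 ∨ (q1 = q2 ∧ j1 < j2))
    (heq : 2^(q1+j1) * (1+2^p)^q1 + 2^(Q+J) * (1+2^p)^Q = 2^(q2+j2) * (1+2^p)^q2) :
    (q1 = q2 ∧ j2 = j1 + 1) ∨ (q2 = q1 + 1 ∧ j1 = p+1 ∧ j2 = 0)
      ∨ (q2 = q1 + 1 ∧ j1 = 1 ∧ j2 = 0) := by
  set B := 1 + 2^p with hBdef
  have hp2 : (2:ℕ) ≤ 2^p := by calc (2:ℕ) = 2^1 := by norm_num
                                   _ ≤ 2^p := Nat.pow_le_pow_right (by norm_num) hp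
  have hB1 : 1 < B := by omega
  have hBodd : Odd B := by
    obtain ⟨t, ht⟩ : Even (2^p) := Nat.even_pow.mpr ⟨even_two, by omega⟩
    exact Nat.odd_iff.mpr (by omega)
  have hBoddQ : ∀ t : ℕ, Odd (B^t) := fun t => hBodd.pow
  rcases hlt with hlt | ⟨rfl, hlt⟩
  · -- q1 < q2
    set e := q2 - q1 with hedef
    have he1 : 1 ≤ e := by omega
    have hq2 : q2 = q1 + e := by omega
    have hBq2 : B^q2 = B^q1 * B^e := by rw [hq2, pow_add]
    have hBe3 : 3 ≤ B^e := by
      calc 3 ≤ B := by omega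
      _ = B^1 := (pow_one B).symm
      _ ≤ B^e := Nat.pow_le_pow_right (by omega) he1
    rcases Nat.lt_trichotomy j1 (e + j2) with hcmp | hcmp | hcmp
    · -- (i) j1 < e + j2 : impossible
      exfalso
      set t := e + j2 - j1 with htdef
      have ht1 : 1 ≤ t := by omega
      set M := 2^t * B^e - 1 with hMdef
      have hM : 2^t * B^e = M + 1 := by
        have : 1 ≤ 2^t * B^e := Nat.one_le_iff_ne_zero.mpr (by positivity)
        omega
      have hR : 2^(q2+j2) * B^q2 = 2^(q1+j1) * B^q1 * (2^t * B^e) := by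
        rw [hBq2, show q2 + j2 = (q1+j1) + t by omega, pow_add]; ring
      rw [hR] at heq
      have hX : 2^(Q+J) * B^Q = 2^(q1+j1) * (B^q1 * M) := by
        zify at heq hM ⊢
        linear_combination heq + (2:ℤ)^(q1+j1) * B^q1 * hM
      have hModd : Odd M := by
        have : Even (2^t * B^e) := (Nat.even_pow.mpr ⟨even_two, by omega⟩).mul_right _
        rcases this with ⟨r, hr⟩
        have hM6 : 2 * 3 ≤ 2^t * B^e :=
          Nat.mul_le_mul (by calc (2:ℕ) = 2^1 := by norm_num
                               _ ≤ 2^t := Nat.pow_le_pow_right (by norm_num) ht1) hBe3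
        exact Nat.odd_iff.mpr (by omega)
      obtain ⟨hA, hOdd⟩ := two_pow_mul_inj (hBoddQ Q) ((hBoddQ q1).mul hModd) hX
      obtain ⟨hq1Q, hMeq⟩ := powB_cancel hB1 (by rcases hModd with ⟨r,hr⟩; omega) hOdd.symm
      rcases Nat.eq_zero_or_pos (Q - q1) with hs | hs
      · rw [hs, pow_zero] at hMeq
        have hM6 : 2 * 3 ≤ 2^t * B^e :=
          Nat.mul_le_mul (by calc (2:ℕ) = 2^1 := by norm_num
                               _ ≤ 2^t := Nat.pow_le_pow_right (by norm_num) ht1) hBe3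
        omega
      · have hd1 : B ∣ M := hMeq ▸ dvd_pow_self B (by omega)
        have hd2 : B ∣ 2^t * B^e := Dvd.dvd.mul_left (dvd_pow_self B (by omega)) _
        have : B ∣ 1 := by
          have := Nat.dvd_sub hd2 hd1
          rwa [hM, Nat.add_sub_cancel_left] at this
        exact absurd (Nat.le_of_dvd one_pos this) (by omega)
    · -- (ii) j1 = e + j2 : closing edge (e=1, j1=1, j2=0)
      have hR : 2^(q2+j2) * B^q2 = 2^(q1+j1) * B^q1 * B^e := by
        rw [hBq2, show q2 + j2 = q1 + j1 by omega]; ring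
      rw [hR] at heq
      obtain ⟨s, w, hw, hsw⟩ := Nat.exists_eq_two_pow_mul_odd (n := B^e - 1) (by omega)
      have hBe : B^e = 2^s * w + 1 := by omega
      have hX : 2^(Q+J) * B^Q = 2^(q1+j1+s) * (B^q1 * w) := by
        rw [pow_add]
        zify at heq hBe ⊢
        linear_combination heq + (2:ℤ)^(q1+j1) * B^q1 * hBe
      obtain ⟨hA, hOdd⟩ := two_pow_mul_inj (hBoddQ Q) ((hBoddQ q1).mul hw) hX
      obtain ⟨hq1Q, hweq⟩ := powB_cancel hB1 (by rcases hw with ⟨r,hr⟩; omega) hOdd.symm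
      rcases Nat.eq_zero_or_pos (Q - q1) with hs2 | hs2
      · rw [hs2, pow_zero] at hweq
        subst hweq
        rw [mul_one] at hBe
        rcases Nat.eq_or_lt_of_le he1 with he | he
        · -- e = 1
          have hsp : s = p := by
            have : (2:ℕ)^s = 2^p := by rw [← he, pow_one] at hBe; omega
            exact Nat.pow_right_injective (by norm_num) this
          right; right
          exact ⟨by omega, by omega, by omega⟩
        · -- e ≥ 2 : contradiction
          exfalso
          have hB2 : B^2 = 2^p * 2^p + 2 * 2^p + 1 := by rw [hBdef]; ring
          have hBee : B^2 ≤ B^e := Nat.pow_le_pow_right (by omega) he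
          have h5 : (2:ℕ)^(p+1) = 2 * 2^p := by rw [pow_succ]; ring
          have hsge : 2^(p+1) ≤ 2^s := by
            have hpp : 2^p ≤ 2^p * 2^p := Nat.le_mul_of_pos_left _ (by positivity)
            omega
          have : p + 1 ≤ s := (Nat.pow_le_pow_iff_right (by norm_num)).mp hsge
          omega
      · exfalso
        have hd1 : B ∣ w := hweq ▸ dvd_pow_self B (by omega)
        have hd2 : B ∣ B^e := dvd_pow_self B (by omega)
        have hd3 : B ∣ 2^s * w := Dvd.dvd.mul_left hd1 _
        have : B ∣ 1 := by
          have := Nat.dvd_sub hd2 hd3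
          rwa [hBe, Nat.add_sub_cancel_left] at this
        exact absurd (Nat.le_of_dvd one_pos this) (by omega)
    · -- (iii) j1 > e + j2 : consecutive across blocks (e=1, j1=p+1, j2=0)
      set u := j1 - e - j2 with hudef
      have hu1 : 1 ≤ u := by omega
      have hup : u ≤ p := by omega
      have h2u : 2^u ≤ 2^p := Nat.pow_le_pow_right (by norm_num) hup
      have hult : 2^u < B^e := by
        calc 2^u ≤ 2^p := h2u
        _ < B := by omega
        _ = B^1 := (pow_one B).symm
        _ ≤ B^e := Nat.pow_le_pow_right (by omega) he1
      set M := B^e - 2^u with hMdef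
      have hM : B^e = M + 2^u := by omega
      have hModd : Odd M := by
        have hBeo := Nat.odd_iff.mp (hBoddQ e)
        have : Even (2^u) := Nat.even_pow.mpr ⟨even_two, by omega⟩
        rcases this with ⟨r, hr⟩
        exact Nat.odd_iff.mpr (by omega)
      have hL : (2:ℕ)^(q1+j1) * B^q1 = 2^(q1+e+j2) * 2^u * B^q1 := by
        rw [← pow_add, show q1 + e + j2 + u = q1 + j1 by omega]
      have hR : 2^(q2+j2) * B^q2 = 2^(q1+e+j2) * B^q1 * B^e := by
        rw [hBq2, show q2 + j2 = q1 + e + j2 by omega]; ring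
      rw [hL, hR] at heq
      have hX : 2^(Q+J) * B^Q = 2^(q1+e+j2) * (B^q1 * M) := by
        zify at heq hM ⊢
        linear_combination heq + (2:ℤ)^(q1+e+j2) * B^q1 * hM
      obtain ⟨hA, hOdd⟩ := two_pow_mul_inj (hBoddQ Q) ((hBoddQ q1).mul hModd) hX
      obtain ⟨hq1Q, hMeq⟩ := powB_cancel hB1 (by rcases hModd with ⟨r,hr⟩; omega) hOdd.symm
      rcases Nat.eq_zero_or_pos (Q - q1) with hs3 | hs3
      · rw [hs3, pow_zero] at hMeq
        rcases Nat.eq_or_lt_of_le he1 with he | he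
        · -- e = 1
          have hBe1 : B = 2^u + 1 := by rw [← pow_one B, he]; omega
          have hup2 : u = p := Nat.pow_right_injective (by norm_num) (by omega : (2:ℕ)^u = 2^p)
          right; left
          exact ⟨by omega, by omega, by omega⟩
        · exfalso
          have hB2 : B^2 = 2^p * 2^p + 2 * 2^p + 1 := by rw [hBdef]; ring
          have hle : B^2 ≤ B^e := Nat.pow_le_pow_right (by omega) he
          have hpp : 2^p ≤ 2^p * 2^p := Nat.le_mul_of_pos_left _ (by positivity)
          omega
      · exfalso
        have hd1 : B ∣ M := hMeq ▸ dvd_pow_self B (by omega)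
        have hd2 : B ∣ B^e := dvd_pow_self B (by omega)
        have : B ∣ 2^u := by
          have := Nat.dvd_sub hd2 hd1
          rwa [hMdef, Nat.sub_sub_self (le_of_lt hult)] at this
        exact odd_not_dvd_two_pow hBodd hB1 this
  · -- q1 = q2toLevel, same block
    set d := j2 - j1 with hddef
    have hd1 : 1 ≤ d := by omega
    set m := 2^d - 1 with hmdef
    have hm : 2^d = m + 1 := by
      have := Nat.one_le_two_pow (n := d)
      omega
    have hR : 2^(q1+j2) * B^q1 = 2^(q1+j1) * B^q1 * 2^d := by
      rw [show q1 + j2 = (q1 + j1) + d by omega, pow_add]; ring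
    rw [hR] at heq
    have hX : 2^(Q+J) * B^Q = 2^(q1+j1) * (B^q1 * m) := by
      zify at heq hm ⊢
      linear_combination heq + (2:ℤ)^(q1+j1) * B^q1 * hm
    have hmodd : Odd m := by
      have : Even (2^d) := Nat.even_pow.mpr ⟨even_two, by omega⟩
      rcases this with ⟨r, hr⟩
      have : 2 ≤ 2^d := by calc (2:ℕ) = 2^1 := by norm_num
                                _ ≤ 2^d := Nat.pow_le_pow_right (by norm_num) hd1
      exact Nat.odd_iff.mpr (by omega)
    obtain ⟨hA, hOdd⟩ := two_pow_mul_inj (hBoddQ Q) ((hBoddQ q1).mul hmodd) hX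
    obtain ⟨hq1Q, hmeq⟩ := powB_cancel hB1 (by rcases hmodd with ⟨r,hr⟩; omega) hOdd.symm
    set e := Q - q1 with hedef
    rcases Nat.eq_zero_or_pos e with he | he
    · rw [he, pow_zero] at hmeq
      have : d = 1 := Nat.pow_right_injective (by norm_num) (by omega : (2:ℕ)^d = 2^1)
      left; exact ⟨rfl, by omega⟩
    · exfalso
      -- j1 ≥ e (from exponent equality), and d ≤ p+1-j1 ≤ p+1-e ≤ p*e, so 2^d-1 < B^e
      have hj1e : e ≤ j1 := by omega
      have hdle : d ≤ p + 1 - e := by omega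
      have h1 : (2:ℕ)^d ≤ 2^(p+1-e) := Nat.pow_le_pow_right (by norm_num) hdle
      have h2 : p + 1 - e ≤ p * e := by
        have : 1 * (p+1) ≤ e * (p+1) := Nat.mul_le_mul_right _ he
        have : p * e + e = e * (p + 1) := by ring
        omega
      have h3 : (2:ℕ)^(p+1-e) ≤ 2^(p*e) := Nat.pow_le_pow_right (by norm_num) h2
      have h4 := B_pow_lower p e he
      rw [← hBdef] at h4
      omega

end Key

def gfun (p : ℕ) (i : ℕ) : ℕ :=
  2 ^ (i % (p+2) + i / (p+2)) * (1 + 2^p) ^ (i / (p+2))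

lemma gfun_eval (p q j : ℕ) (hj : j < p+2) :
    gfun p ((p+2)*q + j) = 2^(j+q) * (1+2^p)^q := by
  unfold gfun
  rw [Nat.mul_add_mod, Nat.mod_eq_of_lt hj, Nat.mul_add_div (by omega),
    Nat.div_eq_of_lt hj, Nat.add_zero]

lemma gfun_mono (p : ℕ) : StrictMono (gfun p) := by
  apply strictMono_nat_of_lt_succ
  intro i
  have hi : (p+2) * (i / (p+2)) + i % (p+2) = i := Nat.div_add_mod i (p+2)
  set q := i / (p+2) with hq
  set j := i % (p+2) with hj
  have hjlt : j < p+2 := Nat.mod_lt _ (by omega)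
  have e0 : gfun p i = 2^(j+q) * (1+2^p)^q := by rw [← hi, gfun_eval _ _ _ hjlt]
  rcases Nat.lt_or_ge j (p+1) with hc | hc
  · have e1 : gfun p (i+1) = 2^(j+1+q) * (1+2^p)^q := by
      rw [show i+1 = (p+2)*q + (j+1) by omega, gfun_eval _ _ _ (by omega)]
    have e2 : 2^(j+1+q) * (1+2^p)^q = 2^(j+q) * (1+2^p)^q + 2^(j+q) * (1+2^p)^q := by ring
    have hpos : 0 < 2^(j+q) * (1+2^p)^q := by positivity
    omega
  · have hje : j = p+1 := by omega
    have hstep : (p+2)*(q+1) = (p+2)*q + (p+2) := by ring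
    have e1 : gfun p (i+1) = 2^(0+(q+1)) * (1+2^p)^(q+1) := by
      rw [show i+1 = (p+2)*(q+1) + 0 by omega, gfun_eval _ _ _ (by omega)]
    have e2 : 2^(0+(q+1)) * (1+2^p)^(q+1)
        = 2^(p+1+q) * (1+2^p)^q + 2^(1+q) * (1+2^p)^q := by ring
    have hpos : 0 < 2^(1+q) * (1+2^p)^q := by positivity
    rw [hje] at e0
    omega

lemma label_eq_gfun (p k : ℕ) (x : Fin (k*(p+2)+1)) :
    altCnSnakeLabel (p+2) k x = gfun p x.val := by
  simp [altCnSnakeLabel, gfun, Nat.add_sub_cancel]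

lemma label_eval (p k q j : ℕ) (hj : j < p+2) (x : Fin (k*(p+2)+1))
    (hx : x.val = (p+2)*q + j) :
    altCnSnakeLabel (p+2) k x = 2^(j+q) * (1+2^p)^q := by
  rw [label_eq_gfun, hx, gfun_eval _ _ _ hj]

/-- For `n ≥ 3`, the alternate `Cₙ`-snake with `k ≥ 1` blocks is a difference
graph via the labeling above. -/
theorem stmt_12 (n k : ℕ) (hn : 3 ≤ n) (hk : 1 ≤ k) :
    Function.Injective (altCnSnakeLabel n k) ∧
    ∀ x y, x ≠ y →
      (altCnSnakeAdj n k x y ↔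
        ((altCnSnakeLabel n k x : ℤ) - (altCnSnakeLabel n k y : ℤ)).natAbs ∈
          Set.range (altCnSnakeLabel n k)) := by
  obtain ⟨p, rfl⟩ : ∃ p, n = p + 2 := ⟨n - 2, by omega⟩
  have hp : 1 ≤ p := by omega
  have hmono : ∀ x y : Fin (k*(p+2)+1), x.val < y.val →
      altCnSnakeLabel (p+2) k x < altCnSnakeLabel (p+2) k y := by
    intro x y h
    rw [label_eq_gfun, label_eq_gfun]
    exact gfun_mono p h
  have main : ∀ x y : Fin (k*(p+2)+1), x.val < y.val →
      (altCnSnakeAdj (p+2) k x y ↔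
        ((altCnSnakeLabel (p+2) k x : ℤ) - (altCnSnakeLabel (p+2) k y : ℤ)).natAbs ∈
          Set.range (altCnSnakeLabel (p+2) k)) := by
    intro x y hxy
    have hLlt := hmono x y hxy
    have hnat : ((altCnSnakeLabel (p+2) k x : ℤ) - (altCnSnakeLabel (p+2) k y : ℤ)).natAbs
        = altCnSnakeLabel (p+2) k y - altCnSnakeLabel (p+2) k x := by omega
    rw [hnat]
    obtain ⟨q1, j1, hj1lt, hx⟩ : ∃ q j, j < p+2 ∧ x.val = (p+2)*q + j :=
      ⟨x.val / (p+2), x.val % (p+2), Nat.mod_lt _ (by omega), (Nat.div_add_mod _ _).symm⟩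
    obtain ⟨q2, j2, hj2lt, hy⟩ : ∃ q j, j < p+2 ∧ y.val = (p+2)*q + j :=
      ⟨y.val / (p+2), y.val % (p+2), Nat.mod_lt _ (by omega), (Nat.div_add_mod _ _).symm⟩
    have hLx := label_eval p k q1 j1 hj1lt x hx
    have hLy := label_eval p k q2 j2 hj2lt y hy
    have hybd : y.val ≤ k * (p+2) := by omega
    have hkc : k * (p+2) = (p+2) * k := by ring
    constructor
    · intro hadj
      have hrel : altCnSnakeRel (p+2) k x y := by
        rcases hadj with h | h
        · exact h
        · exfalso
          rcases h with h | ⟨m, hm, hy', hx'⟩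
          · omega
          · have : (m+1)*(p+2) = m*(p+2) + (p+2) := by ring
            omega
      rcases hrel with hstep | ⟨m, hm, hx', hy'⟩
      · rcases Nat.lt_or_ge j1 (p+1) with hc | hc
        · refine ⟨x, ?_⟩
          have hy2 : y.val = (p+2)*q1 + (j1+1) := by omega
          have hLy' := label_eval p k q1 (j1+1) (by omega) y hy2
          rw [hLx, hLy']
          have : 2^(j1+1+q1) * (1+2^p)^q1
              = 2^(j1+q1)*(1+2^p)^q1 + 2^(j1+q1)*(1+2^p)^q1 := by ring
          omega
        · have hj1e : j1 = p+1 := by omega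
          have hmul : (p+2)*(q1+1) = (p+2)*q1 + (p+2) := by ring
          have hy2 : y.val = (p+2)*(q1+1) + 0 := by omega
          refine ⟨⟨(p+2)*q1 + 1, by omega⟩, ?_⟩
          have hLz := label_eval p k q1 1 (by omega) ⟨(p+2)*q1 + 1, by omega⟩ rfl
          have hLy' := label_eval p k (q1+1) 0 (by omega) y hy2
          rw [hLx, hLy', hLz, hj1e]
          have : 2^(0+(q1+1)) * (1+2^p)^(q1+1)
              = 2^(p+1+q1)*(1+2^p)^q1 + 2^(1+q1)*(1+2^p)^q1 := by ring
          omega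
      · have hmul : (m+1)*(p+2) = m*(p+2) + (p+2) := by ring
        have hcomm : m*(p+2) = (p+2)*m := by ring
        have hmul2 : (p+2)*(m+1) = (p+2)*m + (p+2) := by ring
        refine ⟨⟨(p+2)*m + (p+1), by omega⟩, ?_⟩
        have hLz := label_eval p k m (p+1) (by omega) ⟨(p+2)*m + (p+1), by omega⟩ rfl
        have hLx' := label_eval p k m 1 (by omega) x (by omega)
        have hLy' := label_eval p k (m+1) 0 (by omega) y (by omega)
        rw [hLx', hLy', hLz]
        have : 2^(0+(m+1)) * (1+2^p)^(m+1)
            = 2^(1+m)*(1+2^p)^m + 2^(p+1+m)*(1+2^p)^m := by ring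
        omega
    · rintro ⟨z, hz⟩
      obtain ⟨Q, J, hJlt, hzv⟩ : ∃ q j, j < p+2 ∧ z.val = (p+2)*q + j :=
        ⟨z.val / (p+2), z.val % (p+2), Nat.mod_lt _ (by omega), (Nat.div_add_mod _ _).symm⟩
      have hLz := label_eval p k Q J hJlt z hzv
      rw [hLx, hLy] at hLlt
      rw [hLx, hLy, hLz] at hz
      have heq : 2^(q1+j1)*(1+2^p)^q1 + 2^(Q+J)*(1+2^p)^Q = 2^(q2+j2)*(1+2^p)^q2 := by
        rw [add_comm q1 j1, add_comm Q J, add_comm q2 j2]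
        omega
      have hlt' : q1 < q2 ∨ (q1 = q2 ∧ j1 < j2) := by
        have hqle : q1 < q2 + 1 := by
          apply Nat.lt_of_mul_lt_mul_left (a := p+2)
          have : (p+2)*(q2+1) = (p+2)*q2 + (p+2) := by ring
          omega
        rcases Nat.lt_or_ge q1 q2 with h | h
        · exact Or.inl h
        · have hqq : q1 = q2 := by omega
          subst hqq
          exact Or.inr ⟨rfl, by omega⟩
      rcases key p hp q1 j1 q2 j2 Q J hj1lt hj2lt hJlt hlt' heq with
        ⟨hq, hj⟩ | ⟨hq, hja, hjb⟩ | ⟨hq, hja, hjb⟩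
      · left; left
        subst hq
        omega
      · left; left
        rw [hq] at hy
        have h1 : (p+2)*(q1+1) = (p+2)*q1 + (p+2) := by ring
        omega
      · left; right
        rw [hq] at hy
        have h1 : (p+2)*(q1+1) = (p+2)*q1 + (p+2) := by ring
        have h2 : (q1+1)*(p+2) = (p+2)*(q1+1) := by ring
        have h3 : q1*(p+2) = (p+2)*q1 := by ring
        refine ⟨q1, ?_, by omega, by omega⟩
        have h4 : (p+2)*(q1+1) ≤ (p+2)*k := by omega
        exact Nat.le_of_mul_le_mul_left h4 (by omega)
  refine ⟨?_, ?_⟩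
  · intro x y h
    rcases lt_trichotomy x.val y.val with hc | hc | hc
    · have := hmono x y hc; omega
    · exact Fin.ext hc
    · have := hmono y x hc; omega
  · intro x y hne
    rcases lt_trichotomy x.val y.val with hc | hc | hc
    · exact main x y hc
    · exact absurd (Fin.ext hc) hne
    · have e1 : altCnSnakeAdj (p+2) k x y ↔ altCnSnakeAdj (p+2) k y x := or_comm
      have e2 : ((altCnSnakeLabel (p+2) k x : ℤ) - (altCnSnakeLabel (p+2) k y : ℤ)).natAbs
          = ((altCnSnakeLabel (p+2) k y : ℤ) - (altCnSnakeLabel (p+2) k x : ℤ)).natAbs := by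
        omega
      rw [e1, e2]
      exact main y x hc
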